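/- For every ℓ ≥ 1, the dimension over ℂ of the quotient ring ℂ[X,Y,w]/(X⁸, X²Y, Y², X⁵·w^{ℓ−1}, Y·w^{ℓ−1}, w^ℓ) is 10ℓ − 5. -/

import Mathlib

open MvPolynomial

namespace Stmt10Aux

noncomputable section

variable (ℓ : ℕ)

/-- The generator set. -/
def gens : Set (MvPolynomial (Fin 3) ℂ) :=
  {X 0 ^ 8, X 0 ^ 2 * X 1, X 1 ^ 2, X 0 ^ 5 * X 2 ^ (ℓ - 1), X 1 * X 2 ^ (ℓ - 1), X 2 ^ ℓ}

def I : Ideal (MvPolynomial (Fin 3) ℂ) := Ideal.span (gens ℓ)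

/-- Exponents of monomials lying in the ideal. -/
def S (d : Fin 3 →₀ ℕ) : Prop :=
  8 ≤ d 0 ∨ (2 ≤ d 0 ∧ 1 ≤ d 1) ∨ 2 ≤ d 1 ∨ (5 ≤ d 0 ∧ ℓ - 1 ≤ d 2)
    ∨ (1 ≤ d 1 ∧ ℓ - 1 ≤ d 2) ∨ ℓ ≤ d 2

lemma S_add {d e : Fin 3 →₀ ℕ} (h : S ℓ d) : S ℓ (d + e) := by
  simp only [S, Finsupp.add_apply] at h ⊢
  omega

/-- Polynomials all of whose exponents lie in `S ℓ`, as an ideal. -/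
def J : Ideal (MvPolynomial (Fin 3) ℂ) where
  carrier := {p | ∀ d ∈ p.support, S ℓ d}
  zero_mem' := by simp
  add_mem' := by
    intro a b ha hb d hd
    rcases Finset.mem_union.mp (MvPolynomial.support_add hd) with h | h
    · exact ha d h
    · exact hb d h
  smul_mem' := by
    intro c x hx d hd
    rw [smul_eq_mul] at hd
    obtain ⟨u, _, v, hv, rfl⟩ := Finset.mem_add.mp (MvPolynomial.support_mul c x hd)
    rw [add_comm]
    exact S_add ℓ (hx v hv)

lemma monX : ∀ n : Fin 3, (X n : MvPolynomial (Fin 3) ℂ) = monomial (Finsupp.single n 1) 1 := by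
  intro n
  rw [← pow_one (X n : MvPolynomial (Fin 3) ℂ), X_pow_eq_monomial]

lemma helper_mem (d e : Fin 3 →₀ ℕ) (g : MvPolynomial (Fin 3) ℂ) (hg : g ∈ gens ℓ)
    (hge : g = monomial e 1) (hle : ∀ i, e i ≤ d i) : monomial d (1 : ℂ) ∈ I ℓ := by
  have key : monomial d (1 : ℂ) = monomial (d - e) 1 * g := by
    have hde : d - e + e = d := by
      ext i
      rw [Finsupp.add_apply, Finsupp.tsub_apply]
      exact Nat.sub_add_cancel (hle i)
    rw [hge, monomial_mul, one_mul, hde]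
  rw [key]
  exact Ideal.mul_mem_left _ _ (Ideal.subset_span hg)

lemma g1_eq : (X 0 ^ 8 : MvPolynomial (Fin 3) ℂ) = monomial (Finsupp.single 0 8) 1 :=
  X_pow_eq_monomial

lemma g2_eq : (X 0 ^ 2 * X 1 : MvPolynomial (Fin 3) ℂ)
    = monomial (Finsupp.single 0 2 + Finsupp.single 1 1) 1 := by
  rw [X_pow_eq_monomial, monX, monomial_mul, one_mul]

lemma g3_eq : (X 1 ^ 2 : MvPolynomial (Fin 3) ℂ) = monomial (Finsupp.single 1 2) 1 :=
  X_pow_eq_monomial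

lemma g4_eq : (X 0 ^ 5 * X 2 ^ (ℓ - 1) : MvPolynomial (Fin 3) ℂ)
    = monomial (Finsupp.single 0 5 + Finsupp.single 2 (ℓ - 1)) 1 := by
  rw [X_pow_eq_monomial, X_pow_eq_monomial, monomial_mul, one_mul]

lemma g5_eq : (X 1 * X 2 ^ (ℓ - 1) : MvPolynomial (Fin 3) ℂ)
    = monomial (Finsupp.single 1 1 + Finsupp.single 2 (ℓ - 1)) 1 := by
  rw [monX, X_pow_eq_monomial, monomial_mul, one_mul]

lemma g6_eq : (X 2 ^ ℓ : MvPolynomial (Fin 3) ℂ) = monomial (Finsupp.single 2 ℓ) 1 :=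
  X_pow_eq_monomial

lemma monomial_mem_I {d : Fin 3 →₀ ℕ} (hd : S ℓ d) : monomial d (1 : ℂ) ∈ I ℓ := by
  rcases hd with h | h | h | h | h | h
  · refine helper_mem ℓ d (Finsupp.single 0 8) _ (by simp [gens]) (g1_eq) ?_
    intro i; fin_cases i <;> simp [Finsupp.single_apply] <;> omega
  · refine helper_mem ℓ d (Finsupp.single 0 2 + Finsupp.single 1 1) _ (by simp [gens]) (g2_eq) ?_
    intro i; fin_cases i <;> simp [Finsupp.single_apply] <;> omega
  · refine helper_mem ℓ d (Finsupp.single 1 2) _ (by simp [gens]) (g3_eq) ?_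
    intro i; fin_cases i <;> simp [Finsupp.single_apply] <;> omega
  · refine helper_mem ℓ d (Finsupp.single 0 5 + Finsupp.single 2 (ℓ - 1)) _
      (by simp [gens]) (g4_eq ℓ) ?_
    intro i; fin_cases i <;> simp [Finsupp.single_apply] <;> omega
  · refine helper_mem ℓ d (Finsupp.single 1 1 + Finsupp.single 2 (ℓ - 1)) _
      (by simp [gens]) (g5_eq ℓ) ?_
    intro i; fin_cases i <;> simp [Finsupp.single_apply] <;> omega
  · refine helper_mem ℓ d (Finsupp.single 2 ℓ) _ (by simp [gens]) (g6_eq ℓ) ?_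
    intro i; fin_cases i <;> simp [Finsupp.single_apply] <;> omega

lemma I_le_J : I ℓ ≤ J ℓ := by
  rw [I, Ideal.span_le]
  intro g hg
  have hmon : ∀ (e : Fin 3 →₀ ℕ), g = monomial e 1 → S ℓ e → g ∈ J ℓ := by
    intro e he hSe d hd
    rw [he] at hd
    rw [support_monomial, if_neg one_ne_zero] at hd
    rw [Finset.mem_singleton.mp hd]
    exact hSe
  rcases hg with h | h | h | h | h | h <;> subst h
  · exact hmon _ g1_eq (by simp [S, Finsupp.single_apply])
  · exact hmon _ g2_eq (by
      refine Or.inr (Or.inl ?_)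
      constructor <;> simp [Finsupp.add_apply, Finsupp.single_apply])
  · exact hmon _ g3_eq (by
      refine Or.inr (Or.inr (Or.inl ?_))
      simp [Finsupp.single_apply])
  · exact hmon _ (g4_eq ℓ) (by
      refine Or.inr (Or.inr (Or.inr (Or.inl ?_)))
      constructor <;> simp [Finsupp.add_apply, Finsupp.single_apply])
  · exact hmon _ (g5_eq ℓ) (by
      refine Or.inr (Or.inr (Or.inr (Or.inr (Or.inl ?_))))
      constructor <;> simp [Finsupp.add_apply, Finsupp.single_apply])
  · exact hmon _ (g6_eq ℓ) (by
      refine Or.inr (Or.inr (Or.inr (Or.inr (Or.inr ?_))))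
      simp [Finsupp.single_apply])

/-- Index type for the standard monomial basis. -/
abbrev Idx := (Fin 5 × Fin ℓ) ⊕ (Fin 3 × Fin (ℓ - 1)) ⊕ (Fin 2 × Fin (ℓ - 1))

def mk3 (a b c : ℕ) : Fin 3 →₀ ℕ :=
  Finsupp.single 0 a + Finsupp.single 1 b + Finsupp.single 2 c

lemma mk3_0 (a b c : ℕ) : mk3 a b c 0 = a := by
  simp [mk3, Finsupp.add_apply, Finsupp.single_apply]

lemma mk3_1 (a b c : ℕ) : mk3 a b c 1 = b := by
  simp [mk3, Finsupp.add_apply, Finsupp.single_apply]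

lemma mk3_2 (a b c : ℕ) : mk3 a b c 2 = c := by
  simp [mk3, Finsupp.add_apply, Finsupp.single_apply]

lemma mk3_eta (d : Fin 3 →₀ ℕ) : mk3 (d 0) (d 1) (d 2) = d := by
  ext i
  fin_cases i
  · exact mk3_0 _ _ _
  · exact mk3_1 _ _ _
  · exact mk3_2 _ _ _

def eexp : Idx ℓ → (Fin 3 →₀ ℕ)
  | .inl (a, c) => mk3 (a : ℕ) 0 (c : ℕ)
  | .inr (.inl (a, c)) => mk3 ((a : ℕ) + 5) 0 (c : ℕ)
  | .inr (.inr (a, c)) => mk3 (a : ℕ) 1 (c : ℕ)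

lemma eexp_notS (i : Idx ℓ) : ¬ S ℓ (eexp ℓ i) := by
  rcases i with ⟨a, c⟩ | ⟨a, c⟩ | ⟨a, c⟩ <;>
    · have ha := a.isLt
      have hc := c.isLt
      simp only [S, eexp, mk3_0, mk3_1, mk3_2]
      omega

lemma eexp_inj : Function.Injective (eexp ℓ) := by
  intro i j hij
  have h0 : (eexp ℓ i) 0 = (eexp ℓ j) 0 := by rw [hij]
  have h1 : (eexp ℓ i) 1 = (eexp ℓ j) 1 := by rw [hij]
  have h2 : (eexp ℓ i) 2 = (eexp ℓ j) 2 := by rw [hij]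
  rcases i with ⟨a, c⟩ | ⟨a, c⟩ | ⟨a, c⟩ <;> rcases j with ⟨a', c'⟩ | ⟨a', c'⟩ | ⟨a', c'⟩ <;>
    simp only [eexp, mk3_0, mk3_1, mk3_2] at h0 h1 h2 <;>
    first
      | (exfalso; have ha := a.isLt; have ha' := a'.isLt; omega)
      | (have ea : a = a' := Fin.ext (by omega)
         have ec : c = c' := Fin.ext (by omega)
         rw [ea, ec])

lemma eexp_surj {d : Fin 3 →₀ ℕ} (hd : ¬ S ℓ d) : ∃ i, eexp ℓ i = d := by
  simp only [S, not_or, not_and, not_le] at hd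
  obtain ⟨h8, h21, h2, h5, h11, hl⟩ := hd
  have hb : d 1 = 0 ∨ d 1 = 1 := by omega
  rcases hb with hb | hb
  · by_cases ha : d 0 < 5
    · refine ⟨.inl (⟨d 0, ?_⟩, ⟨d 2, hl⟩), ?_⟩
      · omega
      · simp only [eexp]
        rw [← hb, mk3_eta]
    · refine ⟨.inr (.inl (⟨d 0 - 5, ?_⟩, ⟨d 2, ?_⟩)), ?_⟩
      · omega
      · have := h5 (by omega); omega
      · simp only [eexp]
        have : d 0 - 5 + 5 = d 0 := by omega
        rw [this, ← hb, mk3_eta]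
  · refine ⟨.inr (.inr (⟨d 0, ?_⟩, ⟨d 2, ?_⟩)), ?_⟩
    · have := h21; omega
    · have := h11 (by omega); omega
    · simp only [eexp]
      rw [← hb, mk3_eta]

/-- Polynomials supported in a set of exponents, as a ℂ-submodule. -/
def suppIn (E : Set (Fin 3 →₀ ℕ)) : Submodule ℂ (MvPolynomial (Fin 3) ℂ) where
  carrier := {p | ∀ d ∈ p.support, d ∈ E}
  zero_mem' := by simp
  add_mem' := by
    intro a b ha hb d hd
    rcases Finset.mem_union.mp (MvPolynomial.support_add hd) with h | h
    · exact ha d h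
    · exact hb d h
  smul_mem' := by
    intro c x hx d hd
    exact hx d (MvPolynomial.support_smul hd)

noncomputable def bas : Idx ℓ → (MvPolynomial (Fin 3) ℂ ⧸ I ℓ) :=
  fun i => Ideal.Quotient.mkₐ ℂ (I ℓ) (monomial (eexp ℓ i) 1)

lemma bas_li : LinearIndependent ℂ (bas ℓ) := by
  have hmon : LinearIndependent ℂ
      (fun i : Idx ℓ => (monomial (eexp ℓ i) (1 : ℂ) : MvPolynomial (Fin 3) ℂ)) := by
    have := (basisMonomials (Fin 3) ℂ).linearIndependent.comp (eexp ℓ) (eexp_inj ℓ)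
    simpa [coe_basisMonomials, Function.comp_def] using this
  have hdisj : Disjoint
      (Submodule.span ℂ (Set.range fun i : Idx ℓ =>
        (monomial (eexp ℓ i) (1 : ℂ) : MvPolynomial (Fin 3) ℂ)))
      (LinearMap.ker (Ideal.Quotient.mkₐ ℂ (I ℓ)).toLinearMap) := by
    rw [Submodule.disjoint_def]
    intro p hp hker
    have hpI : p ∈ I ℓ := by
      rwa [LinearMap.mem_ker, AlgHom.toLinearMap_apply, Ideal.Quotient.mkₐ_eq_mk,
        Ideal.Quotient.eq_zero_iff_mem] at hker
    have hpJ : ∀ d ∈ p.support, S ℓ d := I_le_J ℓ hpI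
    have hpN : p ∈ suppIn {d | ¬ S ℓ d} := by
      refine Submodule.span_le.mpr ?_ hp
      rintro q ⟨i, rfl⟩
      intro d hd
      rw [support_monomial, if_neg one_ne_zero, Finset.mem_singleton] at hd
      subst hd
      exact eexp_notS ℓ i
    have : p.support = ∅ := by
      by_contra hne
      obtain ⟨d, hd⟩ := Finset.nonempty_iff_ne_empty.mpr hne
      exact hpN d hd (hpJ d hd)
    exact MvPolynomial.support_eq_empty.mp this
  have h2 := hmon.map hdisj
  unfold bas
  simpa [Function.comp_def, AlgHom.toLinearMap_apply] using h2

lemma bas_span : ⊤ ≤ Submodule.span ℂ (Set.range (bas ℓ)) := by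
  intro x _
  obtain ⟨p, rfl⟩ := Ideal.Quotient.mkₐ_surjective ℂ (I ℓ) x
  rw [← support_sum_monomial_coeff p, map_sum]
  apply Submodule.sum_mem
  intro v _
  have hv : (monomial v) (coeff v p) = coeff v p • (monomial v (1 : ℂ)) := by
    rw [smul_monomial, smul_eq_mul, mul_one]
  rw [hv, map_smul]
  apply Submodule.smul_mem
  by_cases hS : S ℓ v
  · have : Ideal.Quotient.mkₐ ℂ (I ℓ) (monomial v 1) = 0 := by
      rw [Ideal.Quotient.mkₐ_eq_mk, Ideal.Quotient.eq_zero_iff_mem]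
      exact monomial_mem_I ℓ hS
    rw [this]
    exact Submodule.zero_mem _
  · obtain ⟨i, rfl⟩ := eexp_surj ℓ hS
    exact Submodule.subset_span ⟨i, rfl⟩

noncomputable def quotBasis : Module.Basis (Idx ℓ) ℂ (MvPolynomial (Fin 3) ℂ ⧸ I ℓ) :=
  Module.Basis.mk (bas_li ℓ) (bas_span ℓ)

end

end Stmt10Aux

theorem stmt10 (ℓ : ℕ) (hℓ : 1 ≤ ℓ) :
    Module.finrank ℂ (MvPolynomial (Fin 3) ℂ ⧸
      Ideal.span ({X 0 ^ 8, X 0 ^ 2 * X 1, X 1 ^ 2,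
        X 0 ^ 5 * X 2 ^ (ℓ - 1), X 1 * X 2 ^ (ℓ - 1), X 2 ^ ℓ} :
        Set (MvPolynomial (Fin 3) ℂ))) = 10 * ℓ - 5 := by
  have h := Module.finrank_eq_card_basis (Stmt10Aux.quotBasis ℓ)
  have hcard : Fintype.card (Stmt10Aux.Idx ℓ) = 10 * ℓ - 5 := by
    simp only [Stmt10Aux.Idx, Fintype.card_sum, Fintype.card_prod, Fintype.card_fin]
    omega
  rw [hcard] at h
  exact h
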